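/- arXiv:0707.0240 — 2 statements merged into one kernel-verified Lean document; each statement's English description precedes it below -/
import Mathlib

section
/- Let C be a small category. Then the homotopy groupoid of the nerve Σ_*(Ĉ) of the category of fractions Ĉ of C (the localization of C inverting all its arrows) is isomorphic to the homotopy groupoid of the symmetric simplicial set Σ̃_*(C). -/
namespace PosetBundle

open CategoryTheory

universe v u

/-- A 1-simplex of the symmetric simplicial set `Σ̃_*(C)` of a category `C`:
a functor from the poset of nonempty subsets of `{0,1}` to `C`, i.e. a pair of arrows
with common codomain (the support). `t0` is the 0-face, `t1` the 1-face. -/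
structure CSimplex1 (C : Type u) [Category.{v} C] : Type (max u v) where
  t0 : C
  t1 : C
  s : C
  g0 : t0 ⟶ s
  g1 : t1 ⟶ s

/-- A 2-simplex of `Σ̃_*(C)`: a functor from the poset of nonempty subsets of
`{0,1,2}` to `C`. -/
structure CSimplex2 (C : Type u) [Category.{v} C] : Type (max u v) where
  v0 : C
  v1 : C
  v2 : C
  e01 : C
  e02 : C
  e12 : C
  top : C
  a001 : v0 ⟶ e01
  a101 : v1 ⟶ e01
  a002 : v0 ⟶ e02
  a202 : v2 ⟶ e02
  a112 : v1 ⟶ e12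
  a212 : v2 ⟶ e12
  b01 : e01 ⟶ top
  b02 : e02 ⟶ top
  b12 : e12 ⟶ top
  comm0 : a001 ≫ b01 = a002 ≫ b02
  comm1 : a101 ≫ b01 = a112 ≫ b12
  comm2 : a202 ≫ b02 = a212 ≫ b12

variable {C : Type u} [Category.{v} C]

/-- The face `∂₀` of a 2-simplex. -/
def CSimplex2.d0 (c : CSimplex2 C) : CSimplex1 C := ⟨c.v2, c.v1, c.e12, c.a212, c.a112⟩
/-- The face `∂₁` of a 2-simplex. -/
def CSimplex2.d1 (c : CSimplex2 C) : CSimplex1 C := ⟨c.v2, c.v0, c.e02, c.a202, c.a002⟩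
/-- The face `∂₂` of a 2-simplex. -/
def CSimplex2.d2 (c : CSimplex2 C) : CSimplex1 C := ⟨c.v1, c.v0, c.e01, c.a101, c.a001⟩

/-- Paths in the symmetric simplicial set `Σ̃_*(C)`: composable strings of 1-simplices
(the empty path at each object is included; it is identified with the degenerate
1-simplex by the homotopy relation below). -/
inductive CPath (C : Type u) [Category.{v} C] : C → C → Type (max u v) where
  | nil (a : C) : CPath C a a
  | cons {a : C} (s : CSimplex1 C) (p : CPath C a s.t1) : CPath C a s.t0

/-- Concatenation of paths. -/
def CPath.comp {a : C} : ∀ {b c : C}, CPath C a b → CPath C b c → CPath C a c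
  | _, _, p, .nil _ => p
  | _, _, p, .cons s q => .cons s (p.comp q)

/-- The path consisting of a single 1-simplex. -/
def CPath.single (s : CSimplex1 C) : CPath C s.t1 s.t0 := .cons s (.nil s.t1)

theorem CPath.nil_comp {a b : C} (p : CPath C a b) : (CPath.nil a).comp p = p := by
  induction p with
  | nil => simp [CPath.comp]
  | cons s p ih => simp [CPath.comp, ih]

theorem CPath.comp_assoc {a b c d : C} (p : CPath C a b) (q : CPath C b c) (r : CPath C c d) :
    (p.comp q).comp r = p.comp (q.comp r) := by
  induction r with
  | nil => simp [CPath.comp]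
  | cons s r ih => simp [CPath.comp, ih]

/-- Homotopy of paths in `Σ̃_*(C)`: the equivalence relation generated by replacing a
subpath `∂₁c` by `∂₀c * ∂₂c` for a 2-simplex `c` (and identifying the degenerate
1-simplex with the empty path, which plays the role of the unit). -/
inductive CHomotopy : ∀ {a b : C}, CPath C a b → CPath C a b → Prop where
  | refl {a b : C} (p : CPath C a b) : CHomotopy p p
  | symm {a b : C} {p q : CPath C a b} : CHomotopy p q → CHomotopy q p
  | trans {a b : C} {p q r : CPath C a b} : CHomotopy p q → CHomotopy q r → CHomotopy p r
  | comp_congr {a b c : C} {p p' : CPath C a b} {q q' : CPath C b c} :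
      CHomotopy p p' → CHomotopy q q' → CHomotopy (p.comp q) (p'.comp q')
  | step (c : CSimplex2 C) :
      CHomotopy (CPath.single c.d1) ((CPath.single c.d2).comp (CPath.single c.d0))
  | degen (a : C) : CHomotopy (CPath.single ⟨a, a, a, 𝟙 a, 𝟙 a⟩) (CPath.nil a)

/-- The homotopy groupoid `π₁(C)` of `Σ̃_*(C)`, as a category: objects are the objects
of `C`, morphisms are homotopy classes of paths. -/
structure HoSymCat (C : Type u) [Category.{v} C] : Type u where
  as : C

instance : Category.{max u v} (HoSymCat C) where
  Hom a b := Quot (@CHomotopy C _ a.as b.as)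
  id a := Quot.mk _ (CPath.nil a.as)
  comp p q := Quot.lift₂ (fun p q => Quot.mk _ (CPath.comp p q))
    (fun _ _ _ h => Quot.sound (CHomotopy.comp_congr (CHomotopy.refl _) h))
    (fun _ _ _ h => Quot.sound (CHomotopy.comp_congr h (CHomotopy.refl _))) p q
  id_comp f := by
    induction f using Quot.ind with
    | _ p => exact congrArg (Quot.mk _) (CPath.nil_comp p)
  comp_id f := by
    induction f using Quot.ind with
    | _ p => exact congrArg (Quot.mk _) (by simp [CPath.comp])
  assoc f g h := by
    induction f using Quot.ind with
    | _ p =>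
    induction g using Quot.ind with
    | _ q =>
    induction h using Quot.ind with
    | _ r => exact congrArg (Quot.mk _) (CPath.comp_assoc p q r)

/-- Paths in the nerve `Σ_*(D)` of a category `D`: composable strings of arrows
(1-simplices of the nerve). -/
inductive NPath (D : Type u) [Category.{v} D] : D → D → Type (max u v) where
  | nil (a : D) : NPath D a a
  | cons {a b c : D} (f : b ⟶ c) (p : NPath D a b) : NPath D a c

/-- Concatenation of paths in the nerve. -/
def NPath.comp {D : Type u} [Category.{v} D] {a : D} :
    ∀ {b c : D}, NPath D a b → NPath D b c → NPath D a c
  | _, _, p, .nil _ => p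
  | _, _, p, .cons f q => .cons f (p.comp q)

/-- The path consisting of a single arrow. -/
def NPath.single {D : Type u} [Category.{v} D] {a b : D} (f : a ⟶ b) : NPath D a b :=
  .cons f (.nil a)

theorem NPath.nil_comp {D : Type u} [Category.{v} D] {a b : D} (p : NPath D a b) :
    (NPath.nil a).comp p = p := by
  induction p with
  | nil => simp [NPath.comp]
  | cons f p ih => simp [NPath.comp, ih]

theorem NPath.comp_assoc {D : Type u} [Category.{v} D] {a b c d : D}
    (p : NPath D a b) (q : NPath D b c) (r : NPath D c d) :
    (p.comp q).comp r = p.comp (q.comp r) := by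
  induction r with
  | nil => simp [NPath.comp]
  | cons f r ih => simp [NPath.comp, ih]

/-- Homotopy of paths in the nerve `Σ_*(D)`: a 2-simplex of the nerve is a composable
pair `(f, g)` with faces `∂₂ = f`, `∂₀ = g`, `∂₁ = f ≫ g`; the identity 1-simplex
(degenerate) is identified with the empty path. -/
inductive NHomotopy {D : Type u} [Category.{v} D] :
    ∀ {a b : D}, NPath D a b → NPath D a b → Prop where
  | refl {a b : D} (p : NPath D a b) : NHomotopy p p
  | symm {a b : D} {p q : NPath D a b} : NHomotopy p q → NHomotopy q p
  | trans {a b : D} {p q r : NPath D a b} : NHomotopy p q → NHomotopy q r → NHomotopy p r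
  | comp_congr {a b c : D} {p p' : NPath D a b} {q q' : NPath D b c} :
      NHomotopy p p' → NHomotopy q q' → NHomotopy (p.comp q) (p'.comp q')
  | step {a b c : D} (f : a ⟶ b) (g : b ⟶ c) :
      NHomotopy (NPath.single (f ≫ g)) ((NPath.single f).comp (NPath.single g))
  | degen (a : D) : NHomotopy (NPath.single (𝟙 a)) (NPath.nil a)

/-- The homotopy groupoid of the nerve `Σ_*(D)`, as a category. -/
structure HoNerveCat (D : Type u) [Category.{v} D] : Type u where
  as : D

instance {D : Type u} [Category.{v} D] : Category.{max u v} (HoNerveCat D) where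
  Hom a b := Quot (@NHomotopy D _ a.as b.as)
  id a := Quot.mk _ (NPath.nil a.as)
  comp p q := Quot.lift₂ (fun p q => Quot.mk _ (NPath.comp p q))
    (fun _ _ _ h => Quot.sound (NHomotopy.comp_congr (NHomotopy.refl _) h))
    (fun _ _ _ h => Quot.sound (NHomotopy.comp_congr h (NHomotopy.refl _))) p q
  id_comp f := by
    induction f using Quot.ind with
    | _ p => exact congrArg (Quot.mk _) (NPath.nil_comp p)
  comp_id f := by
    induction f using Quot.ind with
    | _ p => exact congrArg (Quot.mk _) (by simp [NPath.comp])
  assoc f g h := by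
    induction f using Quot.ind with
    | _ p =>
    induction g using Quot.ind with
    | _ q =>
    induction h using Quot.ind with
    | _ r => exact congrArg (Quot.mk _) (NPath.comp_assoc p q r)

end PosetBundle
section AuxDev
namespace PosetBundle

open CategoryTheory

universe v u v' u'

variable {C : Type u} [Category.{v} C]

/-! ### Generic nerve-side lemmas -/

section Nerve
variable {D : Type u'} [Category.{v'} D]

/-- Evaluate a nerve path as the composite arrow. -/
def evalNPath : ∀ {a b : D}, NPath D a b → (a ⟶ b)
  | _, _, .nil _ => 𝟙 _
  | _, _, .cons f p => evalNPath p ≫ f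

theorem evalNPath_comp {a b c : D} (p : NPath D a b) (q : NPath D b c) :
    evalNPath (p.comp q) = evalNPath p ≫ evalNPath q := by
  induction q with
  | nil => simp [NPath.comp, evalNPath]
  | cons f q ih => simp [NPath.comp, evalNPath, ih]

theorem evalNPath_sound {a b : D} {p q : NPath D a b} (h : NHomotopy p q) :
    evalNPath p = evalNPath q := by
  induction h with
  | refl => rfl
  | symm _ ih => exact ih.symm
  | trans _ _ ih₁ ih₂ => exact ih₁.trans ih₂
  | comp_congr _ _ ih₁ ih₂ => rw [evalNPath_comp, evalNPath_comp, ih₁, ih₂]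
  | step f g => simp [NPath.single, evalNPath, NPath.comp]
  | degen a => simp [NPath.single, evalNPath]

/-- The evaluation functor from the homotopy category of the nerve to `D`. -/
def evalN : HoNerveCat D ⥤ D where
  obj a := a.as
  map := Quot.lift evalNPath (fun _ _ h => evalNPath_sound h)
  map_id x := by
    show evalNPath (NPath.nil x.as) = 𝟙 x.as
    simp [evalNPath]
  map_comp f g := by
    induction f using Quot.ind with
    | _ p =>
    induction g using Quot.ind with
    | _ q => exact evalNPath_comp p q

/-- The functor from `D` to the homotopy category of its nerve. -/
def singleN : D ⥤ HoNerveCat D where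
  obj a := ⟨a⟩
  map f := Quot.mk _ (NPath.single f)
  map_id a := Quot.sound (NHomotopy.degen a)
  map_comp f g := Quot.sound (NHomotopy.step f g)

theorem single_evalN {a b : D} (p : NPath D a b) :
    NHomotopy (NPath.single (evalNPath p)) p := by
  induction p with
  | nil =>
      simp only [evalNPath]
      exact NHomotopy.degen _
  | cons f p ih =>
      have h1 : p.comp (NPath.single f) = NPath.cons f p := by
        simp [NPath.single, NPath.comp]
      have h2 := (NHomotopy.step (evalNPath p) f).trans
        (NHomotopy.comp_congr ih (NHomotopy.refl (NPath.single f)))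
      rw [h1] at h2
      have h3 : evalNPath (NPath.cons f p) = evalNPath p ≫ f := by simp [evalNPath]
      rw [h3]
      exact h2

theorem evalN_comp_singleN : evalN ⋙ singleN = 𝟭 (HoNerveCat D) := by
  refine CategoryTheory.Functor.ext (fun a => rfl) (fun a b f => ?_)
  induction f using Quot.ind with
  | _ p =>
      erw [eqToHom_refl, eqToHom_refl, Category.comp_id, Category.id_comp]
      exact Quot.sound (single_evalN p)

theorem singleN_comp_evalN : singleN ⋙ evalN = 𝟭 D := by
  refine CategoryTheory.Functor.ext (fun a => rfl) (fun a b f => ?_)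
  show evalNPath (NPath.single f) = _
  erw [eqToHom_refl, eqToHom_refl, Category.comp_id, Category.id_comp]
  simp [NPath.single, evalNPath]

end Nerve

/-! ### Symmetric side -/

noncomputable local instance isIsoQmap {a b : C} (f : a ⟶ b) :
    IsIso ((⊤ : MorphismProperty C).Q.map f) :=
  (⊤ : MorphismProperty C).Q_inverts f trivial

/-- Evaluation of a 1-simplex in the localization. -/
noncomputable def evalSimplex (s : CSimplex1 C) :
    ((⊤ : MorphismProperty C).Q.obj s.t1 ⟶ (⊤ : MorphismProperty C).Q.obj s.t0) :=
  (⊤ : MorphismProperty C).Q.map s.g1 ≫ inv ((⊤ : MorphismProperty C).Q.map s.g0)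

noncomputable def evalCPath :
    ∀ {a b : C}, CPath C a b →
      ((⊤ : MorphismProperty C).Q.obj a ⟶ (⊤ : MorphismProperty C).Q.obj b)
  | _, _, .nil _ => 𝟙 _
  | _, _, .cons s p => evalCPath p ≫ evalSimplex s

theorem evalCPath_comp {a b c : C} (p : CPath C a b) (q : CPath C b c) :
    evalCPath (p.comp q) = evalCPath p ≫ evalCPath q := by
  induction q with
  | nil => simp [CPath.comp, evalCPath]
  | cons s q ih => simp [CPath.comp, evalCPath, ih]

theorem evalStep (c : CSimplex2 C) :
    evalSimplex c.d1 = evalSimplex c.d2 ≫ evalSimplex c.d0 := by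
  set Q := (⊤ : MorphismProperty C).Q
  have e1 : Q.map c.a112 ≫ Q.map c.b12 = Q.map c.a101 ≫ Q.map c.b01 := by
    rw [← Q.map_comp, ← Q.map_comp, c.comm1]
  have e2 : Q.map c.a212 ≫ Q.map c.b12 = Q.map c.a202 ≫ Q.map c.b02 := by
    rw [← Q.map_comp, ← Q.map_comp, c.comm2]
  have e0 : Q.map c.a001 ≫ Q.map c.b01 = Q.map c.a002 ≫ Q.map c.b02 := by
    rw [← Q.map_comp, ← Q.map_comp, c.comm0]
  dsimp [evalSimplex, CSimplex2.d0, CSimplex2.d1, CSimplex2.d2]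
  simp only [Q] at e1 e2 e0 ⊢
  rw [← cancel_mono (Q.map c.a212), ← cancel_mono (Q.map c.b12)]
  simp only [Category.assoc, IsIso.inv_hom_id_assoc]
  erw [IsIso.inv_hom_id_assoc]
  rw [e2, IsIso.inv_hom_id_assoc, e1, IsIso.inv_hom_id_assoc, e0]

theorem evalCPath_sound {a b : C} {p q : CPath C a b} (h : CHomotopy p q) :
    evalCPath p = evalCPath q := by
  induction h with
  | refl => rfl
  | symm _ ih => exact ih.symm
  | trans _ _ ih₁ ih₂ => exact ih₁.trans ih₂
  | comp_congr _ _ ih₁ ih₂ => rw [evalCPath_comp, evalCPath_comp, ih₁, ih₂]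
  | step c =>
      have h := evalStep c
      show evalCPath (CPath.single c.d1) =
        evalCPath ((CPath.single c.d2).comp (CPath.single c.d0))
      dsimp only [CSimplex2.d0, CSimplex2.d1, CSimplex2.d2] at h ⊢
      simp [CPath.single, CPath.comp, evalCPath, h]
  | degen a => simp [CPath.single, evalCPath, evalSimplex]

/-- Evaluation functor from the homotopy category of the symmetric simplicial set
to the localization. -/
noncomputable def evalS : HoSymCat C ⥤ (⊤ : MorphismProperty C).Localization where
  obj a := (⊤ : MorphismProperty C).Q.obj a.as
  map := Quot.lift evalCPath (fun _ _ h => evalCPath_sound h)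
  map_id x := by
    show evalCPath (CPath.nil x.as) = 𝟙 _
    simp [evalCPath]
  map_comp f g := by
    induction f using Quot.ind with
    | _ p =>
    induction g using Quot.ind with
    | _ q => exact evalCPath_comp p q

/-- The simplex `(𝟙 b, f)` associated to an arrow `f : a ⟶ b`. -/
def arrSimplex {a b : C} (f : a ⟶ b) : CSimplex1 C := ⟨b, a, b, 𝟙 b, f⟩

theorem deg2 {a s : C} (g : a ⟶ s) :
    CHomotopy (CPath.single (⟨a, a, s, g, g⟩ : CSimplex1 C)) (CPath.nil a) := by
  have h : CHomotopy (CPath.single (⟨a, a, s, g, g⟩ : CSimplex1 C))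
      ((CPath.single (⟨a, a, a, 𝟙 a, 𝟙 a⟩ : CSimplex1 C)).comp
        (CPath.single (⟨a, a, a, 𝟙 a, 𝟙 a⟩ : CSimplex1 C))) :=
    CHomotopy.step
      (⟨a, a, a, a, s, a, s, 𝟙 a, 𝟙 a, g, g, 𝟙 a, 𝟙 a, g, 𝟙 s, g,
        by simp, by simp, by simp⟩ : CSimplex2 C)
  refine h.trans ?_
  have h2 := CHomotopy.comp_congr (CHomotopy.degen a) (CHomotopy.degen a)
  rwa [CPath.nil_comp] at h2

/-- The functor `C ⥤ HoSymCat C`. -/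
def Lsym : C ⥤ HoSymCat C where
  obj a := ⟨a⟩
  map {a b} f := Quot.mk _ (CPath.single (arrSimplex f))
  map_id a := Quot.sound (CHomotopy.degen a)
  map_comp {a b c} f g := Quot.sound
    ((CHomotopy.step
      (⟨a, b, c, b, c, c, c, f, 𝟙 b, f ≫ g, 𝟙 c, g, 𝟙 c, g, 𝟙 c, 𝟙 c,
        by simp, by simp, by simp⟩ : CSimplex2 C) :
      CHomotopy (CPath.single (arrSimplex (f ≫ g)))
        ((CPath.single (arrSimplex f)).comp (CPath.single (arrSimplex g)))))

instance LsymIso {a b : C} (f : a ⟶ b) : IsIso (Lsym.map f) := by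
  refine ⟨Quot.mk _ (CPath.single (⟨a, b, b, f, 𝟙 b⟩ : CSimplex1 C)), ?_, ?_⟩
  · refine (Quot.sound ?_ : _ = (𝟙 (⟨a⟩ : HoSymCat C)))
    have h : CHomotopy (CPath.single (⟨a, a, b, f, f⟩ : CSimplex1 C))
        ((CPath.single (arrSimplex f)).comp
          (CPath.single (⟨a, b, b, f, 𝟙 b⟩ : CSimplex1 C))) :=
      CHomotopy.step
        (⟨a, b, a, b, b, b, b, f, 𝟙 b, f, f, 𝟙 b, f, 𝟙 b, 𝟙 b, 𝟙 b,
          by simp, by simp, by simp⟩ : CSimplex2 C)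
    exact h.symm.trans (deg2 f)
  · refine (Quot.sound ?_ : _ = (𝟙 (⟨b⟩ : HoSymCat C)))
    have h : CHomotopy (CPath.single (⟨b, b, b, 𝟙 b, 𝟙 b⟩ : CSimplex1 C))
        ((CPath.single (⟨a, b, b, f, 𝟙 b⟩ : CSimplex1 C)).comp
          (CPath.single (arrSimplex f))) :=
      CHomotopy.step
        (⟨b, a, b, b, b, b, b, 𝟙 b, f, 𝟙 b, 𝟙 b, f, 𝟙 b, 𝟙 b, 𝟙 b, 𝟙 b,
          by simp, by simp, by simp⟩ : CSimplex2 C)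
    exact h.symm.trans (CHomotopy.degen b)

theorem keyCons (s : CSimplex1 C) :
    CHomotopy (CPath.single (arrSimplex s.g1))
      ((CPath.single s).comp (CPath.single (arrSimplex s.g0))) :=
  CHomotopy.step
    (⟨s.t1, s.t0, s.s, s.s, s.s, s.s, s.s, s.g1, s.g0, s.g1, 𝟙 s.s, s.g0, 𝟙 s.s,
      𝟙 s.s, 𝟙 s.s, 𝟙 s.s, by simp, by simp, by simp⟩ : CSimplex2 C)

theorem mk_single_eq (s : CSimplex1 C) :
    (Quot.mk _ (CPath.single s) : (⟨s.t1⟩ : HoSymCat C) ⟶ ⟨s.t0⟩) =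
      Lsym.map s.g1 ≫ inv (Lsym.map s.g0) := by
  have hk : (Lsym.map s.g1 : (⟨s.t1⟩ : HoSymCat C) ⟶ ⟨s.s⟩) =
      (Quot.mk _ (CPath.single s) : (⟨s.t1⟩ : HoSymCat C) ⟶ ⟨s.t0⟩) ≫ Lsym.map s.g0 :=
    Quot.sound (keyCons s)
  rw [hk]
  erw [Category.assoc, IsIso.hom_inv_id, Category.comp_id]

theorem mk_cons {a : C} (s : CSimplex1 C) (p : CPath C a s.t1) :
    (Quot.mk _ (CPath.cons s p) : (⟨a⟩ : HoSymCat C) ⟶ ⟨s.t0⟩) =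
      (Quot.mk _ p : (⟨a⟩ : HoSymCat C) ⟶ ⟨s.t1⟩) ≫
        (Lsym.map s.g1 ≫ inv (Lsym.map s.g0)) := by
  rw [← mk_single_eq]
  show Quot.mk _ (CPath.cons s p) = Quot.mk _ (p.comp (CPath.single s))
  congr 1
  simp [CPath.single, CPath.comp]

/-! ### Putting things together -/

/-- The lift of `Lsym` to the localization. -/
noncomputable def Lhat : (⊤ : MorphismProperty C).Localization ⥤ HoSymCat C :=
  Localization.Construction.lift Lsym (fun _ _ f _ => LsymIso f)

theorem Lhat_fac : (⊤ : MorphismProperty C).Q ⋙ Lhat = Lsym (C := C) :=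
  Localization.Construction.fac _ _

theorem Lhat_comp_evalS : Lhat ⋙ evalS = 𝟭 ((⊤ : MorphismProperty C).Localization) := by
  apply Localization.Construction.uniq
  rw [← Functor.assoc, Lhat_fac, Functor.comp_id]
  refine CategoryTheory.Functor.ext (fun a => rfl) (fun a b f => ?_)
  show evalCPath (CPath.single (arrSimplex f)) = _
  erw [eqToHom_refl, eqToHom_refl, Category.comp_id, Category.id_comp]
  simp [CPath.single, evalCPath, evalSimplex, arrSimplex]

theorem Lhat_map_Q {x y : C} (f : x ⟶ y) :
    Lhat.map ((⊤ : MorphismProperty C).Q.map f) = Lsym.map f := by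
  have h := Functor.congr_hom (Lhat_fac (C := C)) f
  erw [eqToHom_refl, eqToHom_refl, Category.comp_id, Category.id_comp] at h
  simpa using h

theorem Lhat_map_eval {a b : C} (p : CPath C a b) :
    Lhat.map (evalCPath p) = (Quot.mk _ p : (⟨a⟩ : HoSymCat C) ⟶ ⟨b⟩) := by
  induction p with
  | nil =>
      have h : evalCPath (CPath.nil a) = 𝟙 _ := by simp [evalCPath]
      rw [h, Lhat.map_id]
      rfl
  | cons s p ih =>
      have h : evalCPath (CPath.cons s p) = evalCPath p ≫ evalSimplex s := by
        simp [evalCPath]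
      rw [h, Lhat.map_comp, ih, mk_cons]
      congr 1
      show Lhat.map (evalSimplex s) = _
      dsimp only [evalSimplex]
      rw [Lhat.map_comp, Lhat.map_inv, Lhat_map_Q]
      congr 1
      simp only [Lhat_map_Q]
      rfl

theorem evalS_comp_Lhat : evalS ⋙ Lhat = 𝟭 (HoSymCat C) := by
  refine CategoryTheory.Functor.ext (fun a => rfl) (fun a b f => ?_)
  induction f using Quot.ind with
  | _ p =>
      erw [eqToHom_refl, eqToHom_refl, Category.comp_id, Category.id_comp]
      exact Lhat_map_eval p

end PosetBundle
end AuxDev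

open PosetBundle CategoryTheory in
/-- For a small category `C`, the homotopy groupoid of the nerve
`Σ_*(Ĉ)` of the category of fractions `Ĉ` (the localization of `C` inverting all
arrows) is isomorphic to the homotopy groupoid of the symmetric simplicial set
`Σ̃_*(C)`. -/
theorem homotopy_groupoid_of_fractions_iso_homotopy_groupoid_sym (C : Type) [SmallCategory C] :
    ∃ (F : HoNerveCat ((⊤ : MorphismProperty C).Localization) ⥤ HoSymCat C)
      (G : HoSymCat C ⥤ HoNerveCat ((⊤ : MorphismProperty C).Localization)),
      F ⋙ G = 𝟭 (HoNerveCat ((⊤ : MorphismProperty C).Localization)) ∧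
      G ⋙ F = 𝟭 (HoSymCat C) := by
  refine ⟨evalN ⋙ Lhat, evalS ⋙ singleN, ?_, ?_⟩
  · calc (evalN ⋙ Lhat) ⋙ (evalS ⋙ singleN)
        = evalN ⋙ (Lhat ⋙ evalS) ⋙ singleN := rfl
      _ = evalN ⋙ 𝟭 _ ⋙ singleN := by rw [Lhat_comp_evalS]
      _ = evalN ⋙ singleN := rfl
      _ = 𝟭 _ := evalN_comp_singleN
  · calc (evalS ⋙ singleN) ⋙ (evalN ⋙ Lhat)
        = evalS ⋙ (singleN ⋙ evalN) ⋙ Lhat := rfl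
      _ = evalS ⋙ 𝟭 _ ⋙ Lhat := by rw [singleN_comp_evalN]
      _ = evalS ⋙ Lhat := rfl
      _ = 𝟭 _ := evalS_comp_Lhat
end

section
/- Let C be a small category and C° its opposite category. Then the homotopy groupoid π₁(C) of the symmetric simplicial set Σ̃_*(C) is isomorphic to the homotopy groupoid π₁(C°) of Σ̃_*(C°). -/
namespace PosetBundle

open CategoryTheory

section Aux

variable {C : Type u} [Category.{v} C]

/-- The edge going "forwards" along a morphism `h : a ⟶ b`: its single path goes `a → b`. -/
def fwdE {a b : C} (h : a ⟶ b) : CSimplex1 C := ⟨b, a, b, 𝟙 b, h⟩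

/-- The edge going "backwards" along a morphism `h : a ⟶ b`: its single path goes `b → a`. -/
def bwdE {a b : C} (h : a ⟶ b) : CSimplex1 C := ⟨a, b, b, h, 𝟙 b⟩

/-- Homotopy class of the forward edge. -/
def fq {a b : C} (h : a ⟶ b) : (HoSymCat.mk a ⟶ HoSymCat.mk b) :=
  Quot.mk _ (CPath.single (fwdE h))

/-- Homotopy class of the backward edge. -/
def bq {a b : C} (h : a ⟶ b) : (HoSymCat.mk b ⟶ HoSymCat.mk a) :=
  Quot.mk _ (CPath.single (bwdE h))

theorem fq_id (a : C) : fq (𝟙 a) = 𝟙 (HoSymCat.mk a) :=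
  Quot.sound (CHomotopy.degen a)

theorem bq_id (a : C) : bq (𝟙 a) = 𝟙 (HoSymCat.mk a) :=
  Quot.sound (CHomotopy.degen a)

theorem fq_comp {a b c : C} (h : a ⟶ b) (k : b ⟶ c) : fq (h ≫ k) = fq h ≫ fq k :=
  Quot.sound (CHomotopy.step
    ⟨a, b, c, b, c, c, c, h, 𝟙 b, h ≫ k, 𝟙 c, k, 𝟙 c, k, 𝟙 c, 𝟙 c, by simp, by simp, by simp⟩)

theorem bq_comp {a b c : C} (h : a ⟶ b) (k : b ⟶ c) : bq (h ≫ k) = bq k ≫ bq h :=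
  Quot.sound (CHomotopy.step
    ⟨c, b, a, c, c, b, c, 𝟙 c, k, 𝟙 c, h ≫ k, 𝟙 b, h, 𝟙 c, 𝟙 c, k, by simp, by simp, by simp⟩)

theorem fq_bq {a b : C} (h : a ⟶ b) : fq h ≫ bq h = 𝟙 (HoSymCat.mk a) :=
  ((Quot.sound (CHomotopy.step
    ⟨a, b, a, b, a, b, b, h, 𝟙 b, 𝟙 a, 𝟙 a, 𝟙 b, h, 𝟙 b, h, 𝟙 b,
      by simp, by simp, by simp⟩)).symm).trans (Quot.sound (CHomotopy.degen a))

theorem bq_fq {a b : C} (h : a ⟶ b) : bq h ≫ fq h = 𝟙 (HoSymCat.mk b) :=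
  ((Quot.sound (CHomotopy.step
    ⟨b, a, b, b, b, b, b, 𝟙 b, h, 𝟙 b, 𝟙 b, h, 𝟙 b, 𝟙 b, 𝟙 b, 𝟙 b,
      by simp, by simp, by simp⟩)).symm).trans (Quot.sound (CHomotopy.degen b))

theorem edge_eq (s : CSimplex1 C) :
    (Quot.mk _ (CPath.single s) : HoSymCat.mk s.t1 ⟶ HoSymCat.mk s.t0) = fq s.g1 ≫ bq s.g0 :=
  Quot.sound (CHomotopy.step
    ⟨s.t1, s.s, s.t0, s.s, s.s, s.s, s.s, s.g1, 𝟙 s.s, s.g1, s.g0, 𝟙 s.s, s.g0,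
      𝟙 s.s, 𝟙 s.s, 𝟙 s.s, by simp, by simp, by simp⟩)

theorem Q_comp {a b c : C} (p : CPath C a b) (q : CPath C b c) :
    CategoryStruct.comp (obj := HoSymCat C) (X := ⟨a⟩) (Y := ⟨b⟩) (Z := ⟨c⟩)
        (Quot.mk _ p) (Quot.mk _ q)
      = Quot.mk _ (p.comp q) :=
  rfl

theorem cons_eq {a : C} (s : CSimplex1 C) (p : CPath C a s.t1) :
    (Quot.mk _ (CPath.cons s p) : HoSymCat.mk a ⟶ HoSymCat.mk s.t0)
      = (Quot.mk _ p : HoSymCat.mk a ⟶ HoSymCat.mk s.t1) ≫ fq s.g1 ≫ bq s.g0 := by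
  have h : CPath.cons s p = p.comp (CPath.single s) := by
    simp [CPath.comp, CPath.single]
  rw [h, ← Q_comp, edge_eq s]

theorem key {V0 V1 V2 E01 E02 E12 T : C}
    (A001 : E01 ⟶ V0) (A101 : E01 ⟶ V1) (A002 : E02 ⟶ V0) (A202 : E02 ⟶ V2)
    (A112 : E12 ⟶ V1) (A212 : E12 ⟶ V2) (B01 : T ⟶ E01) (B02 : T ⟶ E02) (B12 : T ⟶ E12)
    (h0 : B01 ≫ A001 = B02 ≫ A002) (h1 : B01 ≫ A101 = B12 ≫ A112)
    (h2 : B02 ≫ A202 = B12 ≫ A212) :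
    bq A002 ≫ fq A202 = (bq A001 ≫ fq A101) ≫ (bq A112 ≫ fq A212) := by
  have mid : fq A101 ≫ bq A112 = bq B01 ≫ fq B12 := by
    calc fq A101 ≫ bq A112
        = (bq B01 ≫ fq B01) ≫ (fq A101 ≫ bq A112) := by rw [bq_fq, Category.id_comp]
      _ = bq B01 ≫ (fq (B01 ≫ A101) ≫ bq A112) := by
            rw [fq_comp]; simp only [Category.assoc]
      _ = bq B01 ≫ (fq (B12 ≫ A112) ≫ bq A112) := by rw [h1]
      _ = bq B01 ≫ (fq B12 ≫ (fq A112 ≫ bq A112)) := by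
            rw [fq_comp]; simp only [Category.assoc]
      _ = bq B01 ≫ fq B12 := by rw [fq_bq, Category.comp_id]
  calc bq A002 ≫ fq A202
      = bq A002 ≫ ((bq B02 ≫ fq B02) ≫ fq A202) := by rw [bq_fq, Category.id_comp]
    _ = bq (B02 ≫ A002) ≫ fq (B02 ≫ A202) := by
          rw [bq_comp, fq_comp]; simp only [Category.assoc]
    _ = bq (B01 ≫ A001) ≫ fq (B12 ≫ A212) := by rw [h0, h2]
    _ = (bq A001 ≫ bq B01) ≫ (fq B12 ≫ fq A212) := by rw [bq_comp, fq_comp]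
    _ = bq A001 ≫ ((fq A101 ≫ bq A112) ≫ fq A212) := by
          rw [mid]; simp only [Category.assoc]
    _ = (bq A001 ≫ fq A101) ≫ (bq A112 ≫ fq A212) := by simp only [Category.assoc]

end Aux

section Map

variable {D : Type u} [Category.{v} D] {E : Type u₂} [Category.{v₂} E]

/-- Generic contravariant map on paths. -/
def mq (o : D → E) (φ : ∀ {a b : D}, (a ⟶ b) → (o b ⟶ o a)) :
    ∀ {a b : D}, CPath D a b → (HoSymCat.mk (o a) ⟶ HoSymCat.mk (o b))
  | _, _, .nil _ => 𝟙 _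
  | _, _, .cons s p => mq o φ p ≫ (bq (φ s.g1) ≫ fq (φ s.g0))

theorem mq_comp (o : D → E) (φ : ∀ {a b : D}, (a ⟶ b) → (o b ⟶ o a)) {a b c : D}
    (p : CPath D a b) (q : CPath D b c) :
    mq o φ (p.comp q) = mq o φ p ≫ mq o φ q := by
  induction q with
  | nil => simp [CPath.comp, mq]
  | cons s q ih => simp [CPath.comp, mq, ih]

theorem mq_hom (o : D → E) (φ : ∀ {a b : D}, (a ⟶ b) → (o b ⟶ o a))
    (hid : ∀ a : D, φ (𝟙 a) = 𝟙 (o a))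
    (hcomp : ∀ {a b c : D} (h : a ⟶ b) (k : b ⟶ c), φ (h ≫ k) = φ k ≫ φ h)
    {a b : D} {p q : CPath D a b} (h : CHomotopy p q) : mq o φ p = mq o φ q := by
  induction h with
  | refl => rfl
  | symm _ ih => exact ih.symm
  | trans _ _ ih1 ih2 => exact ih1.trans ih2
  | comp_congr _ _ ih1 ih2 => rw [mq_comp, mq_comp, ih1, ih2]
  | degen a => simp [mq, CPath.single, hid, bq_id, fq_id]
  | step c =>
      refine Eq.trans ?_ (mq_comp o φ (CPath.single c.d2) (CPath.single c.d0)).symm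
      show mq o φ (CPath.single c.d1) =
        mq o φ (CPath.single c.d2) ≫ mq o φ (CPath.single c.d0)
      simp only [mq, CPath.single, CSimplex2.d0, CSimplex2.d1, CSimplex2.d2,
        Category.id_comp]
      exact key (φ c.a001) (φ c.a101) (φ c.a002) (φ c.a202) (φ c.a112) (φ c.a212)
        (φ c.b01) (φ c.b02) (φ c.b12)
        (by rw [← hcomp, ← hcomp, c.comm0])
        (by rw [← hcomp, ← hcomp, c.comm1])
        (by rw [← hcomp, ← hcomp, c.comm2])

/-- The functor between homotopy groupoids induced by a contravariant map. -/
def Fgen (o : D → E) (φ : ∀ {a b : D}, (a ⟶ b) → (o b ⟶ o a))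
    (hid : ∀ a : D, φ (𝟙 a) = 𝟙 (o a))
    (hcomp : ∀ {a b c : D} (h : a ⟶ b) (k : b ⟶ c), φ (h ≫ k) = φ k ≫ φ h) :
    HoSymCat D ⥤ HoSymCat E where
  obj a := ⟨o a.as⟩
  map {a b} f := Quot.lift (mq o φ) (fun _ _ h => mq_hom o φ hid hcomp h) f
  map_id a := by
    show mq o φ (CPath.nil a.as) = _
    simp only [mq]
  map_comp {a b c} f g := by
    induction f using Quot.ind with
    | _ p =>
    induction g using Quot.ind with
    | _ q => exact mq_comp o φ p q

end Map

section Map2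

variable {D : Type u} [Category.{v} D] {E : Type u₂} [Category.{v₂} E]
variable (o : D → E) (φ : ∀ {a b : D}, (a ⟶ b) → (o b ⟶ o a))
variable (hid : ∀ a : D, φ (𝟙 a) = 𝟙 (o a))
variable (hcomp : ∀ {a b c : D} (h : a ⟶ b) (k : b ⟶ c), φ (h ≫ k) = φ k ≫ φ h)

theorem Fgen_map_fq {a b : D} (h : a ⟶ b) :
    (Fgen o φ hid hcomp).map (fq h) = bq (φ h) := by
  show mq o φ (CPath.single (fwdE h)) = _
  simp only [mq, CPath.single, fwdE]
  rw [hid, fq_id, Category.id_comp, Category.comp_id]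

theorem Fgen_map_bq {a b : D} (h : a ⟶ b) :
    (Fgen o φ hid hcomp).map (bq h) = fq (φ h) := by
  show mq o φ (CPath.single (bwdE h)) = _
  simp only [mq, CPath.single, bwdE]
  rw [hid, bq_id, Category.id_comp, Category.id_comp]

end Map2

section OpFunctors

variable (C : Type u) [Category.{v} C]

/-- The canonical functor `π₁(C) ⥤ π₁(Cᵒᵖ)`. -/
def Fop : HoSymCat C ⥤ HoSymCat Cᵒᵖ :=
  Fgen (fun a => Opposite.op a) (fun h => h.op) (fun _ => rfl) (fun _ _ => rfl)

/-- The canonical functor `π₁(Cᵒᵖ) ⥤ π₁(C)`. -/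
def Gop : HoSymCat Cᵒᵖ ⥤ HoSymCat C :=
  Fgen (fun x => x.unop) (fun h => h.unop) (fun _ => rfl) (fun _ _ => rfl)

variable {C}

theorem GF_fq {a b : C} (h : a ⟶ b) : (Gop C).map ((Fop C).map (fq h)) = fq h := by
  rw [show (Fop C).map (fq h) = bq h.op from Fgen_map_fq _ _ (fun _ => rfl) (fun _ _ => rfl) h]
  exact Fgen_map_bq _ _ (fun _ => rfl) (fun _ _ => rfl) h.op

theorem GF_bq {a b : C} (h : a ⟶ b) : (Gop C).map ((Fop C).map (bq h)) = bq h := by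
  rw [show (Fop C).map (bq h) = fq h.op from Fgen_map_bq _ _ (fun _ => rfl) (fun _ _ => rfl) h]
  exact Fgen_map_fq _ _ (fun _ => rfl) (fun _ _ => rfl) h.op

theorem FG_fq {x y : Cᵒᵖ} (k : x ⟶ y) : (Fop C).map ((Gop C).map (fq k)) = fq k := by
  rw [show (Gop C).map (fq k) = bq k.unop from Fgen_map_fq _ _ (fun _ => rfl) (fun _ _ => rfl) k]
  exact Fgen_map_bq _ _ (fun _ => rfl) (fun _ _ => rfl) k.unop

theorem FG_bq {x y : Cᵒᵖ} (k : x ⟶ y) : (Fop C).map ((Gop C).map (bq k)) = bq k := by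
  rw [show (Gop C).map (bq k) = fq k.unop from Fgen_map_bq _ _ (fun _ => rfl) (fun _ _ => rfl) k]
  exact Fgen_map_fq _ _ (fun _ => rfl) (fun _ _ => rfl) k.unop

theorem GF_fix {a b : C} (p : CPath C a b) :
    (Gop C).map ((Fop C).map (Quot.mk _ p : HoSymCat.mk a ⟶ HoSymCat.mk b)) = Quot.mk _ p := by
  induction p with
  | nil =>
      show (Gop C).map ((Fop C).map (𝟙 (HoSymCat.mk a))) = _
      rw [CategoryTheory.Functor.map_id, CategoryTheory.Functor.map_id]
      rfl
  | cons s p ih =>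
      rw [cons_eq s p, Functor.map_comp, Functor.map_comp, Functor.map_comp,
        Functor.map_comp, ih, GF_fq, GF_bq]
      exact (cons_eq s p).symm

theorem FG_fix {x y : Cᵒᵖ} (p : CPath Cᵒᵖ x y) :
    (Fop C).map ((Gop C).map (Quot.mk _ p : HoSymCat.mk x ⟶ HoSymCat.mk y)) = Quot.mk _ p := by
  induction p with
  | nil =>
      show (Fop C).map ((Gop C).map (𝟙 (HoSymCat.mk x))) = _
      rw [CategoryTheory.Functor.map_id, CategoryTheory.Functor.map_id]
      rfl
  | cons s p ih =>
      rw [cons_eq s p, Functor.map_comp, Functor.map_comp, Functor.map_comp,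
        Functor.map_comp, ih, FG_fq, FG_bq]
      exact (cons_eq s p).symm

end OpFunctors

end PosetBundle

open PosetBundle CategoryTheory in
/-- For a small category `C`, the homotopy groupoid `π₁(C)` of the
symmetric simplicial set `Σ̃_*(C)` is isomorphic to the homotopy groupoid `π₁(C°)`
of `Σ̃_*(C°)`, where `C°` is the opposite category. -/
theorem homotopy_groupoid_iso_homotopy_groupoid_op (C : Type) [SmallCategory C] :
    ∃ (F : HoSymCat C ⥤ HoSymCat Cᵒᵖ) (G : HoSymCat Cᵒᵖ ⥤ HoSymCat C),
      F ⋙ G = 𝟭 (HoSymCat C) ∧ G ⋙ F = 𝟭 (HoSymCat Cᵒᵖ) := by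
  refine ⟨Fop C, Gop C, ?_, ?_⟩
  · refine CategoryTheory.Functor.ext (fun X => rfl) (fun X Y f => ?_)
    induction f using Quot.ind with
    | _ p =>
        simp only [eqToHom_refl, Category.comp_id, Category.id_comp, Functor.comp_map,
          Functor.id_map]
        erw [eqToHom_refl, eqToHom_refl, Category.id_comp, Category.comp_id]
        exact GF_fix p
  · refine CategoryTheory.Functor.ext (fun X => rfl) (fun X Y f => ?_)
    induction f using Quot.ind with
    | _ p =>
        simp only [eqToHom_refl, Category.comp_id, Category.id_comp, Functor.comp_map,
          Functor.id_map]
        erw [eqToHom_refl, eqToHom_refl, Category.id_comp, Category.comp_id]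
        exact FG_fix p
end
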